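/- Let R be a finite (not necessarily unital, not necessarily commutative) ring and S a subring of R. Then Pr(R) ≤ Pr(S, R) ≤ Pr(S). -/

import Mathlib

open scoped Pointwise

/-- The probability that a randomly chosen pair, one element from `S` and one from `T`,
commutes (multiplicatively). For a subring `S` of a finite ring `R` this gives
`Pr(S, R) = relCommProb R S Set.univ`, `Pr(R) = relCommProb R Set.univ Set.univ`, etc. -/
noncomputable def relCommProb (R : Type*) [NonUnitalRing R] (S T : Set R) : ℚ :=
  (Nat.card {p : S × T // (p.1 : R) * (p.2 : R) = (p.2 : R) * (p.1 : R)} : ℚ) /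
    ((Nat.card S : ℚ) * (Nat.card T : ℚ))

/-- `C_S(r)`: the centralizer of `r` in the subring `S`, as an additive subgroup of `R`.
Taking `S = ⊤` gives `C_R(r)`. -/
def centIn {R : Type*} [NonUnitalRing R] (S : NonUnitalSubring R) (r : R) : AddSubgroup R where
  carrier := {x | x ∈ S ∧ x * r = r * x}
  zero_mem' := ⟨S.zero_mem, by rw [zero_mul, mul_zero]⟩
  add_mem' := by
    rintro a b ⟨ha, ha'⟩ ⟨hb, hb'⟩
    exact ⟨S.add_mem ha hb, by rw [add_mul, mul_add, ha', hb']⟩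
  neg_mem' := by
    rintro a ⟨ha, ha'⟩
    exact ⟨S.neg_mem ha, by rw [neg_mul, mul_neg, ha']⟩

/-- `Z(S, R)`: the elements of the subring `S` commuting with every element of `R`,
as an additive subgroup of `R`.  Taking `S = ⊤` gives the center `Z(R)`. -/
def zCenter {R : Type*} [NonUnitalRing R] (S : NonUnitalSubring R) : AddSubgroup R where
  carrier := {x | x ∈ S ∧ ∀ r : R, x * r = r * x}
  zero_mem' := ⟨S.zero_mem, fun r => by rw [zero_mul, mul_zero]⟩
  add_mem' := by
    rintro a b ⟨ha, ha'⟩ ⟨hb, hb'⟩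
    exact ⟨S.add_mem ha hb, fun r => by rw [add_mul, mul_add, ha' r, hb' r]⟩
  neg_mem' := by
    rintro a ⟨ha, ha'⟩
    exact ⟨S.neg_mem ha, fun r => by rw [neg_mul, mul_neg, ha' r]⟩

/-- `K(S, R)`: the set of additive commutators `s*r - r*s` with `s ∈ S`, `r ∈ R`. -/
def kSet {R : Type*} [NonUnitalRing R] (S : NonUnitalSubring R) : Set R :=
  {x | ∃ s ∈ S, ∃ r : R, x = s * r - r * s}

/-- `[S, R]`: the additive subgroup of `(R, +)` generated by `K(S, R)`. -/
def commSub {R : Type*} [NonUnitalRing R] (S : NonUnitalSubring R) : AddSubgroup R :=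
  AddSubgroup.closure (kSet S)

/-- `[x, R]`: the additive subgroup of all commutators `x*y - y*x`, `y ∈ R`. -/
def elemComm {R : Type*} [NonUnitalRing R] (x : R) : AddSubgroup R where
  carrier := {z | ∃ y : R, z = x * y - y * x}
  zero_mem' := ⟨0, by simp⟩
  add_mem' := by
    rintro a b ⟨y, rfl⟩ ⟨z, rfl⟩
    exact ⟨y + z, by rw [mul_add, add_mul]; abel⟩
  neg_mem' := by
    rintro a ⟨y, rfl⟩
    exact ⟨-y, by rw [mul_neg, neg_mul]; abel⟩

section Aux

lemma key_card' {G : Type*} [AddCommGroup G] [Finite G] (A B : AddSubgroup G) :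
    Nat.card A * Nat.card B ≤ Nat.card (A ⊓ B : AddSubgroup G) * Nat.card G := by
  have h1 : Nat.card A = Nat.card (A ⊓ B : AddSubgroup G) * (B.relIndex A) := by
    rw [← AddSubgroup.card_mul_index (B.addSubgroupOf A), AddSubgroup.relIndex]
    congr 1
    rw [← AddSubgroup.inf_addSubgroupOf_right, inf_comm A B]
    exact Nat.card_congr (AddSubgroup.addSubgroupOfEquivOfLe inf_le_right).toEquiv
  have h2 : B.relIndex A ≤ B.index :=
    Nat.le_of_dvd (Nat.pos_of_ne_zero B.index_ne_zero_of_finite)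
      (B.relIndex_dvd_index_of_normal A)
  calc Nat.card A * Nat.card B
      = Nat.card (A ⊓ B : AddSubgroup G) * (B.relIndex A * Nat.card B) := by rw [h1]; ring
    _ ≤ Nat.card (A ⊓ B : AddSubgroup G) * (B.index * Nat.card B) :=
        Nat.mul_le_mul_left _ (Nat.mul_le_mul_right _ h2)
    _ = Nat.card (A ⊓ B : AddSubgroup G) * Nat.card G := by rw [B.index_mul_card]

variable {R : Type*} [NonUnitalRing R]

lemma pairs_card' (A B : Set R) [Fintype ↥A] [Fintype ↥B] :
    Nat.card {p : ↥A × ↥B // (p.1 : R) * (p.2 : R) = (p.2 : R) * (p.1 : R)} =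
      ∑ a : ↥A, Nat.card {b : ↥B // (a : R) * (b : R) = (b : R) * (a : R)} := by
  classical
  rw [Nat.card_congr (Equiv.subtypeProdEquivSigmaSubtype
    (fun (a : ↥A) (b : ↥B) => (a : R) * b = (b : R) * a))]
  rw [Nat.card_eq_fintype_card, Fintype.card_sigma]
  simp [Nat.card_eq_fintype_card]

lemma pairs_swap' (A B : Set R) :
    Nat.card {p : ↥A × ↥B // (p.1 : R) * (p.2 : R) = (p.2 : R) * (p.1 : R)} =
      Nat.card {p : ↥B × ↥A // (p.1 : R) * (p.2 : R) = (p.2 : R) * (p.1 : R)} :=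
  Nat.card_congr <| (Equiv.prodComm ↥A ↥B).subtypeEquiv (fun p => by
    simp [Equiv.prodComm, eq_comm])

lemma summand_S' (S : NonUnitalSubring R) (s : R) :
    Nat.card {t : ↥(S : Set R) // s * (t : R) = (t : R) * s} = Nat.card (centIn S s) :=
  Nat.card_congr <|
    (Equiv.subtypeSubtypeEquivSubtypeInter (· ∈ (S : Set R)) (fun x => s * x = x * s)).trans
    (Equiv.subtypeEquivRight (q := (· ∈ centIn S s)) fun x =>
      ⟨fun h => ⟨h.1, h.2.symm⟩, fun h => ⟨h.1, h.2.symm⟩⟩)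

lemma summand_univ' (s : R) :
    Nat.card {t : ↥(Set.univ : Set R) // s * (t : R) = (t : R) * s} =
      Nat.card (centIn (⊤ : NonUnitalSubring R) s) :=
  Nat.card_congr <|
    (Equiv.subtypeSubtypeEquivSubtypeInter (· ∈ (Set.univ : Set R)) (fun x => s * x = x * s)).trans
    (Equiv.subtypeEquivRight (q := (· ∈ centIn (⊤ : NonUnitalSubring R) s)) fun _ =>
      ⟨fun h => ⟨NonUnitalSubring.mem_top _, h.2.symm⟩, fun h => ⟨trivial, h.2.symm⟩⟩)

lemma centIn_inf' (S : NonUnitalSubring R) (r : R) :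
    centIn S r = centIn (⊤ : NonUnitalSubring R) r ⊓ S.toAddSubgroup := by
  ext x
  simp only [centIn, AddSubgroup.mem_mk, Set.mem_setOf_eq, AddSubgroup.mem_inf,
    NonUnitalSubring.mem_toAddSubgroup, NonUnitalSubring.mem_top, true_and]
  exact Iff.intro (fun h => And.intro h.2 h.1) (fun h => And.intro h.2 h.1)

end Aux

/-- For a subring `S` of a finite ring `R`: `Pr(R) ≤ Pr(S, R) ≤ Pr(S)`. -/
theorem commProb_le_relCommProb_le_commProb {R : Type*} [NonUnitalRing R] [Fintype R]
    (S : NonUnitalSubring R) :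
    relCommProb R Set.univ Set.univ ≤ relCommProb R (S : Set R) Set.univ ∧
    relCommProb R (S : Set R) Set.univ ≤ relCommProb R (S : Set R) (S : Set R) := by
  classical
  haveI : Fintype ↥(S : Set R) := Fintype.ofFinite _
  haveI : Fintype ↥(Set.univ : Set R) := Fintype.ofFinite _
  set n := Nat.card R with hn_def
  set m := Nat.card ↥(S : Set R) with hm_def
  have hmS : Nat.card ↥(S.toAddSubgroup) = m :=
    Nat.card_congr (Equiv.subtypeEquivRight fun x => Iff.rfl)
  have hnU : Nat.card ↥(Set.univ : Set R) = n := Nat.card_congr (Equiv.Set.univ R)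
  have key : ∀ r : R,
      Nat.card (centIn (⊤ : NonUnitalSubring R) r) * m ≤ Nat.card (centIn S r) * n := by
    intro r
    have h := key_card' (centIn (⊤ : NonUnitalSubring R) r) S.toAddSubgroup
    rw [← centIn_inf', hmS] at h
    exact h
  have hRR : Nat.card {p : ↥(Set.univ : Set R) × ↥(Set.univ : Set R) //
        (p.1 : R) * (p.2 : R) = (p.2 : R) * (p.1 : R)} =
      ∑ a : ↥(Set.univ : Set R), Nat.card (centIn (⊤ : NonUnitalSubring R) (a : R)) := by
    rw [pairs_card']
    exact Finset.sum_congr rfl fun a _ => summand_univ' (a : R)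
  have hSR1 : Nat.card {p : ↥(S : Set R) × ↥(Set.univ : Set R) //
        (p.1 : R) * (p.2 : R) = (p.2 : R) * (p.1 : R)} =
      ∑ a : ↥(S : Set R), Nat.card (centIn (⊤ : NonUnitalSubring R) (a : R)) := by
    rw [pairs_card']
    exact Finset.sum_congr rfl fun a _ => summand_univ' (a : R)
  have hSR2 : Nat.card {p : ↥(S : Set R) × ↥(Set.univ : Set R) //
        (p.1 : R) * (p.2 : R) = (p.2 : R) * (p.1 : R)} =
      ∑ a : ↥(Set.univ : Set R), Nat.card (centIn S (a : R)) := by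
    rw [pairs_swap', pairs_card']
    exact Finset.sum_congr rfl fun a _ => summand_S' S (a : R)
  have hSS : Nat.card {p : ↥(S : Set R) × ↥(S : Set R) //
        (p.1 : R) * (p.2 : R) = (p.2 : R) * (p.1 : R)} =
      ∑ a : ↥(S : Set R), Nat.card (centIn S (a : R)) := by
    rw [pairs_card']
    exact Finset.sum_congr rfl fun a _ => summand_S' S (a : R)
  have h1 : Nat.card {p : ↥(Set.univ : Set R) × ↥(Set.univ : Set R) //
        (p.1 : R) * (p.2 : R) = (p.2 : R) * (p.1 : R)} * m ≤
      Nat.card {p : ↥(S : Set R) × ↥(Set.univ : Set R) //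
        (p.1 : R) * (p.2 : R) = (p.2 : R) * (p.1 : R)} * n := by
    rw [hRR, hSR2, Finset.sum_mul, Finset.sum_mul]
    exact Finset.sum_le_sum fun a _ => key (a : R)
  have h2 : Nat.card {p : ↥(S : Set R) × ↥(Set.univ : Set R) //
        (p.1 : R) * (p.2 : R) = (p.2 : R) * (p.1 : R)} * m ≤
      Nat.card {p : ↥(S : Set R) × ↥(S : Set R) //
        (p.1 : R) * (p.2 : R) = (p.2 : R) * (p.1 : R)} * n := by
    rw [hSR1, hSS, Finset.sum_mul, Finset.sum_mul]
    exact Finset.sum_le_sum fun a _ => key (a : R)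
  have hn : 0 < n := Nat.card_pos
  have hm : 0 < m := by
    haveI : Nonempty ↥(S : Set R) := ⟨⟨0, S.zero_mem⟩⟩
    exact Nat.card_pos
  have hnQ : (0 : ℚ) < (n : ℚ) := by exact_mod_cast hn
  have hmQ : (0 : ℚ) < (m : ℚ) := by exact_mod_cast hm
  rw [relCommProb, relCommProb, relCommProb, hnU, ← hm_def]
  have h1Q : (Nat.card {p : ↥(Set.univ : Set R) × ↥(Set.univ : Set R) //
        (p.1 : R) * (p.2 : R) = (p.2 : R) * (p.1 : R)} : ℚ) * m ≤
      (Nat.card {p : ↥(S : Set R) × ↥(Set.univ : Set R) //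
        (p.1 : R) * (p.2 : R) = (p.2 : R) * (p.1 : R)} : ℚ) * n := by
    exact_mod_cast h1
  have h2Q : (Nat.card {p : ↥(S : Set R) × ↥(Set.univ : Set R) //
        (p.1 : R) * (p.2 : R) = (p.2 : R) * (p.1 : R)} : ℚ) * m ≤
      (Nat.card {p : ↥(S : Set R) × ↥(S : Set R) //
        (p.1 : R) * (p.2 : R) = (p.2 : R) * (p.1 : R)} : ℚ) * n := by
    exact_mod_cast h2
  constructor
  · rw [div_le_div_iff₀ (by positivity) (by positivity)]
    nlinarith [h1Q, hnQ.le, hmQ.le]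
  · rw [div_le_div_iff₀ (by positivity) (by positivity)]
    nlinarith [h2Q, hnQ.le, hmQ.le]
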